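/- arXiv:2301.04953 — 2 statements merged into one kernel-verified Lean document; each statement's English description precedes it below -/
import Mathlib

section
/- The two inductive definitions of forts coincide. Define classes A(ℓ) and B(ℓ) of subsets of ℝ^ℓ inductively by: A(1)=B(1)={(0,n) : n a positive integer}; A(ℓ) consists of all sets ℱ¹⋉s := ⋃_{𝒞∈C(ℱ¹)} 𝒞×s(𝒞), where ℱ¹∈A(1) and s is a map from C(ℱ¹) to A(ℓ−1); B(ℓ) consists of all sets 𝒢⊙φ := {(x,x_ℓ) : x∈𝒢, 0<x_ℓ<φ(x)}, where 𝒢∈B(ℓ−1) and φ: 𝒢→ℕ_{≥1} is a function constant on each integer cell of 𝒢. Then A(ℓ)=B(ℓ) for every ℓ≥1. -/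
open Set

namespace Forts

/-- An integer cell of length 1: a singleton `{k}` or an open interval `(k, k+1)`, `k : ℤ`. -/
def Cell1 (S : Set ℝ) : Prop :=
  ∃ k : ℤ, S = {(k : ℝ)} ∨ S = Set.Ioo (k : ℝ) ((k : ℝ) + 1)

/-- An integer cell of length ℓ: a product of ℓ integer cells of length 1. -/
def Cell {ℓ : ℕ} (S : Set (Fin ℓ → ℝ)) : Prop :=
  ∃ c : Fin ℓ → Set ℝ, (∀ i, Cell1 (c i)) ∧ S = {x | ∀ i, x i ∈ c i}

/-- `cellsOf S` is the collection of integer cells contained in `S`. -/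
def cellsOf {ℓ : ℕ} (S : Set (Fin ℓ → ℝ)) : Set (Set (Fin ℓ → ℝ)) :=
  {C | Cell C ∧ C ⊆ S}

/-- Forts, defined inductively along the first coordinate: a fort of length 1 is an
interval `(0, n)` with `n ≥ 1`; given a fort `F1` of length 1 and an assignment `s` of a
fort of length ℓ to each integer cell of `F1`, the set `F1 ⋉ s = ⋃_{C ∈ C(F1)} C × s(C)`
is a fort of length `ℓ + 1`. -/
inductive Fort : (ℓ : ℕ) → Set (Fin ℓ → ℝ) → Prop
  | base (n : ℕ) (hn : 0 < n) : Fort 1 {x : Fin 1 → ℝ | x 0 ∈ Set.Ioo (0 : ℝ) (n : ℝ)}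
  | step {ℓ : ℕ} (F1 : Set (Fin 1 → ℝ)) (s : Set (Fin 1 → ℝ) → Set (Fin ℓ → ℝ))
      (hF1 : Fort 1 F1) (hs : ∀ C ∈ cellsOf F1, Fort ℓ (s C)) :
      Fort (ℓ + 1)
        {x : Fin (ℓ + 1) → ℝ | ∃ C ∈ cellsOf F1, (fun _ : Fin 1 => x 0) ∈ C ∧ Fin.tail x ∈ s C}

/-- A map between subsets of ℝ^ℓ is precellular if each coordinate function depends only on
the first `i` coordinates and is strictly increasing in the `i`-th coordinate. -/
def Precellular {ℓ : ℕ} (X : Set (Fin ℓ → ℝ)) (f : (Fin ℓ → ℝ) → (Fin ℓ → ℝ)) : Prop :=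
  (∀ i : Fin ℓ, ∀ x ∈ X, ∀ y ∈ X, (∀ j : Fin ℓ, j ≤ i → x j = y j) → f x i = f y i) ∧
  (∀ i : Fin ℓ, ∀ x ∈ X, ∀ y ∈ X, (∀ j : Fin ℓ, j < i → x j = y j) → x i < y i → f x i < f y i)

/-- A morphism of forts: surjective, precellular, maps integer cells into integer cells, and
is continuous on each integer cell. -/
def Morphism {ℓ : ℕ} (F G : Set (Fin ℓ → ℝ)) (φ : (Fin ℓ → ℝ) → (Fin ℓ → ℝ)) : Prop :=
  φ '' F = G ∧ Precellular F φ ∧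
    ∀ C ∈ cellsOf F, (∃ C₂ ∈ cellsOf G, φ '' C ⊆ C₂) ∧ ContinuousOn φ C

/-- Two morphisms are combinatorially equivalent if they map each integer cell of the source
into the same integer cell of the target. -/
def CombEquiv {ℓ : ℕ} (F G : Set (Fin ℓ → ℝ)) (φ ψ : (Fin ℓ → ℝ) → (Fin ℓ → ℝ)) : Prop :=
  ∀ C ∈ cellsOf F, ∃ C₂ ∈ cellsOf G, φ '' C ⊆ C₂ ∧ ψ '' C ⊆ C₂

/-- Projection to the first `i` coordinates. -/
def proj {ℓ : ℕ} (i : ℕ) (h : i ≤ ℓ) (x : Fin ℓ → ℝ) : Fin i → ℝ :=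
  fun j => x (Fin.castLE h j)

/-- The last `ℓ - i` coordinates. -/
def tailpart {ℓ i : ℕ} (h : i ≤ ℓ) (x : Fin ℓ → ℝ) : Fin (ℓ - i) → ℝ :=
  fun j => x ⟨i + (j : ℕ), by have := j.2; omega⟩

/-- Glue a prefix of length `i` with a suffix of length `ℓ - i`. -/
def glue {ℓ i : ℕ} (h : i ≤ ℓ) (x : Fin i → ℝ) (y : Fin (ℓ - i) → ℝ) : Fin ℓ → ℝ :=
  fun j => if hj : (j : ℕ) < i then x ⟨(j : ℕ), hj⟩
    else y ⟨(j : ℕ) - i, by have := j.2; omega⟩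

/-- The fiber `X_x = {y : (x, y) ∈ X}` of `X ⊆ ℝ^ℓ` over `x ∈ ℝ^i`. -/
def fiber {ℓ i : ℕ} (h : i ≤ ℓ) (X : Set (Fin ℓ → ℝ)) (x : Fin i → ℝ) :
    Set (Fin (ℓ - i) → ℝ) :=
  {y | glue h x y ∈ X}

end Forts

namespace Forts

/-- Definition of forts along the first coordinate (`ℱ¹ ⋉ s`), class `A(ℓ)`. -/
inductive FortA : (ℓ : ℕ) → Set (Fin ℓ → ℝ) → Prop
  | base (n : ℕ) (hn : 0 < n) : FortA 1 {x : Fin 1 → ℝ | x 0 ∈ Set.Ioo (0 : ℝ) (n : ℝ)}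
  | step {ℓ : ℕ} (F1 : Set (Fin 1 → ℝ)) (s : Set (Fin 1 → ℝ) → Set (Fin ℓ → ℝ))
      (hF1 : FortA 1 F1) (hs : ∀ C ∈ cellsOf F1, FortA ℓ (s C)) :
      FortA (ℓ + 1)
        {x : Fin (ℓ + 1) → ℝ | ∃ C ∈ cellsOf F1, (fun _ : Fin 1 => x 0) ∈ C ∧ Fin.tail x ∈ s C}

/-- Definition of forts along the last coordinate (`𝒢 ⊙ φ`), class `B(ℓ)`. -/
inductive FortB : (ℓ : ℕ) → Set (Fin ℓ → ℝ) → Prop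
  | base (n : ℕ) (hn : 0 < n) : FortB 1 {x : Fin 1 → ℝ | x 0 ∈ Set.Ioo (0 : ℝ) (n : ℝ)}
  | step {ℓ : ℕ} (G : Set (Fin ℓ → ℝ)) (φ : (Fin ℓ → ℝ) → ℕ)
      (hG : FortB ℓ G) (hφ : ∀ x ∈ G, 1 ≤ φ x)
      (hconst : ∀ C ∈ cellsOf G, ∀ x ∈ C, ∀ y ∈ C, φ x = φ y) :
      FortB (ℓ + 1)
        {x : Fin (ℓ + 1) → ℝ | Fin.init x ∈ G ∧ 0 < x (Fin.last ℓ) ∧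
          x (Fin.last ℓ) < (φ (Fin.init x) : ℝ)}

attribute [local instance] Classical.propDecidable

/-- The canonical integer cell of length 1 containing a real number. -/
noncomputable def pointCell (p : ℝ) : Set ℝ :=
  if ∃ k : ℤ, p = (k : ℝ) then {p} else Set.Ioo (⌊p⌋ : ℝ) ((⌊p⌋ : ℝ) + 1)

lemma mem_pointCell (p : ℝ) : p ∈ pointCell p := by
  unfold pointCell
  split_ifs with h
  · exact rfl
  · refine ⟨lt_of_le_of_ne (Int.floor_le p) ?_, Int.lt_floor_add_one p⟩
    intro he
    exact h ⟨⌊p⌋, he.symm⟩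

lemma cell1_pointCell (p : ℝ) : Cell1 (pointCell p) := by
  unfold pointCell
  split_ifs with h
  · obtain ⟨k, hk⟩ := h
    exact ⟨k, Or.inl (by rw [hk])⟩
  · exact ⟨⌊p⌋, Or.inr rfl⟩

lemma cell1_eq_pointCell {S : Set ℝ} {p : ℝ} (hS : Cell1 S) (hp : p ∈ S) :
    S = pointCell p := by
  obtain ⟨k, hk | hk⟩ := hS
  · subst hk
    have hpk : p = (k : ℝ) := hp
    unfold pointCell
    rw [if_pos ⟨k, hpk⟩, hpk]
  · subst hk
    have h1 : ¬ ∃ m : ℤ, p = (m : ℝ) := by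
      rintro ⟨m, rfl⟩
      have h2 : k < m := by exact_mod_cast hp.1
      have h3 : (m : ℝ) < (k : ℝ) + 1 := hp.2
      have h4 : m < k + 1 := by exact_mod_cast h3
      omega
    have hfl : ⌊p⌋ = k := by
      rw [Int.floor_eq_iff]
      exact ⟨le_of_lt hp.1, by exact_mod_cast hp.2⟩
    unfold pointCell
    rw [if_neg h1, hfl]

lemma pointCell_subset_Ioo {p : ℝ} {n : ℕ} (h0 : 0 < p) (hn : p < (n : ℝ)) :
    pointCell p ⊆ Set.Ioo 0 (n : ℝ) := by
  unfold pointCell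
  split_ifs with h
  · intro q hq
    rw [Set.mem_singleton_iff] at hq
    subst hq; exact ⟨h0, hn⟩
  · have hf0 : (0 : ℝ) ≤ (⌊p⌋ : ℝ) := by
      exact_mod_cast Int.floor_nonneg.2 (le_of_lt h0)
    have hfn : (⌊p⌋ : ℝ) + 1 ≤ (n : ℝ) := by
      have : ⌊p⌋ < (n : ℤ) := by
        rw [Int.floor_lt]; exact_mod_cast hn
      have : ⌊p⌋ + 1 ≤ (n : ℤ) := this
      exact_mod_cast this
    exact Set.Ioo_subset_Ioo hf0 hfn

/-- The canonical integer cell containing a point of ℝ^ℓ. -/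
def pcV {ℓ : ℕ} (x : Fin ℓ → ℝ) : Set (Fin ℓ → ℝ) :=
  {y | ∀ i, y i ∈ pointCell (x i)}

lemma cell_pcV {ℓ : ℕ} (x : Fin ℓ → ℝ) : Cell (pcV x) :=
  ⟨fun i => pointCell (x i), fun i => cell1_pointCell _, rfl⟩

lemma mem_pcV {ℓ : ℕ} (x : Fin ℓ → ℝ) : x ∈ pcV x := fun i => mem_pointCell _

lemma cell_eq_pcV {ℓ : ℕ} {S : Set (Fin ℓ → ℝ)} {x : Fin ℓ → ℝ}
    (hS : Cell S) (hx : x ∈ S) : S = pcV x := by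
  obtain ⟨c, hc, rfl⟩ := hS
  have hce : ∀ i, c i = pointCell (x i) := fun i => cell1_eq_pointCell (hc i) (hx i)
  ext y
  exact forall_congr' fun i => by rw [hce i]

lemma cell1_nonempty {S : Set ℝ} (h : Cell1 S) : S.Nonempty := by
  obtain ⟨k, hk | hk⟩ := h
  · exact ⟨(k : ℝ), hk ▸ rfl⟩
  · subst hk
    exact ⟨(k : ℝ) + 1/2, by constructor <;> norm_num⟩

lemma cell_nonempty {ℓ : ℕ} {S : Set (Fin ℓ → ℝ)} (h : Cell S) : S.Nonempty := by
  obtain ⟨c, hc, rfl⟩ := h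
  exact ⟨fun i => (cell1_nonempty (hc i)).choose, fun i => (cell1_nonempty (hc i)).choose_spec⟩

/-- A chosen point of a set. -/
noncomputable def ptOf {α : Type*} [Inhabited α] (C : Set α) : α :=
  if h : C.Nonempty then h.choose else default

lemma ptOf_mem {α : Type*} [Inhabited α] {C : Set α} (h : C.Nonempty) : ptOf C ∈ C := by
  rw [ptOf, dif_pos h]; exact h.choose_spec

/- Fin juggling -/
lemma fin1_funext {x y : Fin 1 → ℝ} (h : x 0 = y 0) : x = y :=
  funext fun i => by rw [Subsingleton.elim i 0, h]

lemma init_zero {n : ℕ} (x : Fin (n + 2) → ℝ) : Fin.init x 0 = x 0 := by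
  simp [Fin.init]

lemma init_one (x : Fin 2 → ℝ) : Fin.init x = fun _ : Fin 1 => x 0 :=
  fin1_funext (init_zero x)

lemma tail_init {n : ℕ} (x : Fin (n + 2) → ℝ) :
    Fin.tail (Fin.init x) = Fin.init (Fin.tail x) := by
  funext i
  simp [Fin.tail, Fin.init, Fin.succ_castSucc, -Fin.castSucc_succ]

lemma tail_last {n : ℕ} (x : Fin (n + 2) → ℝ) :
    Fin.tail x (Fin.last n) = x (Fin.last (n + 1)) := by
  simp [Fin.tail, Fin.succ_last]

lemma tail_zero_one (x : Fin 2 → ℝ) : Fin.tail x 0 = x (Fin.last 1) := rfl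

lemma pcV_one (a : ℝ) : pcV (fun _ : Fin 1 => a) = {z : Fin 1 → ℝ | z 0 ∈ pointCell a} := by
  ext z
  constructor
  · intro h; exact h 0
  · intro h i; rw [Subsingleton.elim i 0]; exact h

lemma cell_cons {ℓ : ℕ} {c : Set ℝ} {D : Set (Fin ℓ → ℝ)} (hc : Cell1 c) (hD : Cell D) :
    Cell {x : Fin (ℓ + 1) → ℝ | x 0 ∈ c ∧ Fin.tail x ∈ D} := by
  obtain ⟨d, hd, rfl⟩ := hD
  refine ⟨Fin.cons c d, fun i => ?_, ?_⟩
  · refine Fin.cases ?_ (fun j => ?_) i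
    · simpa using hc
    · simpa using hd j
  · ext x
    constructor
    · rintro ⟨h0, ht⟩ i
      refine Fin.cases ?_ (fun j => ?_) i
      · simpa using h0
      · simpa [Fin.tail] using ht j
    · intro h
      exact ⟨by simpa using h 0, fun j => by simpa [Fin.tail] using h j.succ⟩
lemma coverage_A : ∀ {ℓ : ℕ} {S : Set (Fin ℓ → ℝ)}, FortA ℓ S → ∀ x ∈ S, pcV x ⊆ S := by
  intro ℓ S h
  induction h with
  | base n hn =>
    intro x hx y hy
    exact pointCell_subset_Ioo hx.1 hx.2 (hy 0)
  | step F1 s hF1 hs ih1 ih2 =>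
    rintro x ⟨C, hC, hxC, hxs⟩ y hy
    have hCeq : C = pcV (fun _ : Fin 1 => x 0) := cell_eq_pcV hC.1 hxC
    refine ⟨C, hC, ?_, ?_⟩
    · rw [hCeq, pcV_one]
      exact hy 0
    · exact ih2 C hC (Fin.tail x) hxs (fun i => hy i.succ)

lemma coverage_B : ∀ {ℓ : ℕ} {S : Set (Fin ℓ → ℝ)}, FortB ℓ S → ∀ x ∈ S, pcV x ⊆ S := by
  intro ℓ S h
  induction h with
  | base n hn =>
    intro x hx y hy
    exact pointCell_subset_Ioo hx.1 hx.2 (hy 0)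
  | step G φ hG hφ hconst ih =>
    rintro x ⟨hxG, hx0, hxφ⟩ y hy
    have hyG : Fin.init y ∈ pcV (Fin.init x) := fun i => hy i.castSucc
    have hinit : Fin.init y ∈ G := ih (Fin.init x) hxG hyG
    have hCcell : pcV (Fin.init x) ∈ cellsOf G := ⟨cell_pcV _, ih (Fin.init x) hxG⟩
    have hφeq : φ (Fin.init y) = φ (Fin.init x) :=
      hconst _ hCcell _ hyG _ (mem_pcV _)
    have hlast : y (Fin.last _) ∈ Set.Ioo (0:ℝ) ((φ (Fin.init x) : ℝ)) :=
      pointCell_subset_Ioo hx0 hxφ (hy (Fin.last _))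
    exact ⟨hinit, hlast.1, by rw [hφeq]; exact hlast.2⟩

lemma fortA_nonempty {ℓ : ℕ} {S : Set (Fin ℓ → ℝ)} (h : FortA ℓ S) : S.Nonempty := by
  induction h with
  | base n hn =>
    refine ⟨fun _ => 1/2, ?_, ?_⟩
    · norm_num
    · have : (1:ℝ) ≤ n := by exact_mod_cast hn
      calc ((1:ℝ)/2) < 1 := by norm_num
        _ ≤ n := this
  | step F1 s hF1 hs ih1 ih2 =>
    obtain ⟨z, hz⟩ := ih1
    have hC : pcV z ∈ cellsOf F1 := ⟨cell_pcV _, coverage_A hF1 z hz⟩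
    obtain ⟨y, hy⟩ := ih2 (pcV z) hC
    refine ⟨Fin.cons (z 0) y, pcV z, hC, ?_, ?_⟩
    · intro i
      rw [Subsingleton.elim i 0]
      simpa using mem_pointCell (z 0)
    · simpa [Fin.tail_cons] using hy

lemma fortB_nonempty {ℓ : ℕ} {S : Set (Fin ℓ → ℝ)} (h : FortB ℓ S) : S.Nonempty := by
  induction h with
  | base n hn =>
    refine ⟨fun _ => 1/2, ?_, ?_⟩
    · norm_num
    · have : (1:ℝ) ≤ n := by exact_mod_cast hn
      calc ((1:ℝ)/2) < 1 := by norm_num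
        _ ≤ n := this
  | step G φ hG hφ hconst ih =>
    obtain ⟨z, hz⟩ := ih
    refine ⟨Fin.snoc z (1/2), ?_, ?_, ?_⟩
    · simpa [Fin.init_snoc] using hz
    · simp
    · rw [Fin.snoc_last, Fin.init_snoc]
      have : (1:ℝ) ≤ φ z := by exact_mod_cast hφ z hz
      calc ((1:ℝ)/2) < 1 := by norm_num
        _ ≤ φ z := this

lemma not_fortA_zero {S : Set (Fin 0 → ℝ)} (h : FortA 0 S) : False := by cases h

lemma not_fortB_zero {S : Set (Fin 0 → ℝ)} (h : FortB 0 S) : False := by cases h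

lemma fortA_one {S : Set (Fin 1 → ℝ)} (h : FortA 1 S) :
    ∃ n : ℕ, 0 < n ∧ S = {x : Fin 1 → ℝ | x 0 ∈ Set.Ioo (0:ℝ) (n:ℝ)} := by
  cases h with
  | base n hn => exact ⟨n, hn, rfl⟩
  | step F1 s hF1 hs =>
    exfalso
    obtain ⟨z, hz⟩ := fortA_nonempty hF1
    exact not_fortA_zero (hs (pcV z) ⟨cell_pcV _, coverage_A hF1 z hz⟩)

lemma fortB_one {S : Set (Fin 1 → ℝ)} (h : FortB 1 S) :
    ∃ n : ℕ, 0 < n ∧ S = {x : Fin 1 → ℝ | x 0 ∈ Set.Ioo (0:ℝ) (n:ℝ)} := by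
  cases h with
  | base n hn => exact ⟨n, hn, rfl⟩
  | step G φ hG hφ hconst => exact absurd hG not_fortB_zero

lemma fortA1_iff_fortB1 {S : Set (Fin 1 → ℝ)} : FortA 1 S ↔ FortB 1 S := by
  constructor
  · intro h
    obtain ⟨n, hn, rfl⟩ := fortA_one h
    exact FortB.base n hn
  · intro h
    obtain ⟨n, hn, rfl⟩ := fortB_one h
    exact FortA.base n hn

lemma fortB_succ_inv {m : ℕ} (hm : 1 ≤ m) {S : Set (Fin (m + 1) → ℝ)} (h : FortB (m + 1) S) :
    ∃ (G : Set (Fin m → ℝ)) (φ : (Fin m → ℝ) → ℕ), FortB m G ∧ (∀ y ∈ G, 1 ≤ φ y) ∧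
      (∀ D ∈ cellsOf G, ∀ y ∈ D, ∀ z ∈ D, φ y = φ z) ∧
      S = {x : Fin (m + 1) → ℝ | Fin.init x ∈ G ∧ 0 < x (Fin.last m) ∧
        x (Fin.last m) < (φ (Fin.init x) : ℝ)} := by
  cases h with
  | base n hn => omega
  | step G φ hG hφ hconst => exact ⟨G, φ, hG, hφ, hconst, rfl⟩

lemma fortA_succ_inv {m : ℕ} (hm : 1 ≤ m) {S : Set (Fin (m + 1) → ℝ)} (h : FortA (m + 1) S) :
    ∃ (F1 : Set (Fin 1 → ℝ)) (t : Set (Fin 1 → ℝ) → Set (Fin m → ℝ)),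
      FortA 1 F1 ∧ (∀ C ∈ cellsOf F1, FortA m (t C)) ∧
      S = {x : Fin (m + 1) → ℝ | ∃ C ∈ cellsOf F1,
        (fun _ : Fin 1 => x 0) ∈ C ∧ Fin.tail x ∈ t C} := by
  cases h with
  | base n hn => omega
  | step F1 s hF1 hs => exact ⟨F1, s, hF1, hs, rfl⟩

/-- Extract the `n` from a length-1 fort. -/
noncomputable def nOf (S : Set (Fin 1 → ℝ)) : ℕ :=
  if h : ∃ n : ℕ, 0 < n ∧ S = {x : Fin 1 → ℝ | x 0 ∈ Set.Ioo (0:ℝ) (n:ℝ)} then h.choose else 1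

lemma nOf_spec {S : Set (Fin 1 → ℝ)} (h : FortB 1 S) :
    0 < nOf S ∧ S = {x : Fin 1 → ℝ | x 0 ∈ Set.Ioo (0:ℝ) ((nOf S : ℝ))} := by
  have h' := fortB_one h
  rw [nOf, dif_pos h']
  exact h'.choose_spec
lemma join_B (ℓ : ℕ) (hℓ : 1 ≤ ℓ) :
    ∀ (F1 : Set (Fin 1 → ℝ)) (s : Set (Fin 1 → ℝ) → Set (Fin ℓ → ℝ)),
      FortB 1 F1 → (∀ C ∈ cellsOf F1, FortB ℓ (s C)) →
      FortB (ℓ + 1) {x : Fin (ℓ + 1) → ℝ | ∃ C ∈ cellsOf F1,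
        (fun _ : Fin 1 => x 0) ∈ C ∧ Fin.tail x ∈ s C} := by
  induction ℓ, hℓ using Nat.le_induction with
  | base =>
    intro F1 s hF1 hs
    set φ : (Fin 1 → ℝ) → ℕ := fun z => nOf (s (pcV z)) with hφdef
    have hmemcell : ∀ z ∈ F1, pcV z ∈ cellsOf F1 :=
      fun z hz => ⟨cell_pcV _, coverage_B hF1 z hz⟩
    have key : {x : Fin 2 → ℝ | ∃ C ∈ cellsOf F1,
        (fun _ : Fin 1 => x 0) ∈ C ∧ Fin.tail x ∈ s C}
        = {x : Fin 2 → ℝ | Fin.init x ∈ F1 ∧ 0 < x (Fin.last 1) ∧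
            x (Fin.last 1) < (φ (Fin.init x) : ℝ)} := by
      ext x
      constructor
      · rintro ⟨C, hC, hxC, hxs⟩
        have hCeq : C = pcV (fun _ : Fin 1 => x 0) := cell_eq_pcV hC.1 hxC
        have hinit : Fin.init x = fun _ : Fin 1 => x 0 := init_one x
        have hspec := nOf_spec (hs C hC)
        rw [hspec.2] at hxs
        have h0 : Fin.tail x 0 ∈ Set.Ioo (0:ℝ) ((nOf (s C) : ℝ)) := hxs
        rw [tail_zero_one] at h0
        refine ⟨?_, h0.1, ?_⟩
        · rw [hinit]; exact hC.2 hxC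
        · have : φ (Fin.init x) = nOf (s C) := by
            rw [hφdef]; simp only []
            rw [hinit, ← hCeq]
          rw [this]; exact h0.2
      · rintro ⟨hG, h0, hlt⟩
        have hinit : Fin.init x = fun _ : Fin 1 => x 0 := init_one x
        have hC : pcV (fun _ : Fin 1 => x 0) ∈ cellsOf F1 := by
          rw [← hinit]; exact hmemcell _ hG
        refine ⟨pcV (fun _ : Fin 1 => x 0), hC, mem_pcV _, ?_⟩
        have hspec := nOf_spec (hs _ hC)
        rw [hspec.2]
        have : φ (Fin.init x) = nOf (s (pcV (fun _ : Fin 1 => x 0))) := by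
          rw [hφdef]; simp only []
          rw [hinit]
        rw [this] at hlt
        show Fin.tail x 0 ∈ Set.Ioo (0:ℝ) _
        rw [tail_zero_one]
        exact ⟨h0, hlt⟩
    rw [key]
    refine FortB.step F1 φ hF1 ?_ ?_
    · intro z hz
      exact (nOf_spec (hs _ (hmemcell z hz))).1
    · intro C hC z hz w hw
      have h1 : C = pcV z := cell_eq_pcV hC.1 hz
      have h2 : C = pcV w := cell_eq_pcV hC.1 hw
      rw [hφdef]; simp only []
      rw [← h1, ← h2]
  | succ n hn ih =>
    intro F1 s hF1 hs
    have H : ∀ C, C ∈ cellsOf F1 → ∃ (G : Set (Fin n → ℝ)) (ψ : (Fin n → ℝ) → ℕ),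
        FortB n G ∧ (∀ y ∈ G, 1 ≤ ψ y) ∧
        (∀ D ∈ cellsOf G, ∀ y ∈ D, ∀ z ∈ D, ψ y = ψ z) ∧
        s C = {x : Fin (n + 1) → ℝ | Fin.init x ∈ G ∧ 0 < x (Fin.last n) ∧
          x (Fin.last n) < (ψ (Fin.init x) : ℝ)} :=
      fun C hC => fortB_succ_inv hn (hs C hC)
    choose! GC φC hG hφ hconst hEq using H
    set G : Set (Fin (n + 1) → ℝ) := {x : Fin (n + 1) → ℝ | ∃ C ∈ cellsOf F1,
      (fun _ : Fin 1 => x 0) ∈ C ∧ Fin.tail x ∈ GC C} with hGdef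
    have hGB : FortB (n + 1) G := ih F1 GC hF1 hG
    set Φ : (Fin (n + 1) → ℝ) → ℕ :=
      fun y => φC (pcV (fun _ : Fin 1 => y 0)) (Fin.tail y) with hΦdef
    have hΦ1 : ∀ y ∈ G, 1 ≤ Φ y := by
      rintro y ⟨C, hC, hyC, hyt⟩
      have hCeq : C = pcV (fun _ : Fin 1 => y 0) := cell_eq_pcV hC.1 hyC
      rw [hΦdef]; simp only []
      rw [← hCeq]
      exact hφ C hC _ hyt
    have hΦconst : ∀ E ∈ cellsOf G, ∀ x ∈ E, ∀ y ∈ E, Φ x = Φ y := by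
      rintro E ⟨hEcell, hEsub⟩ x hxE y hyE
      obtain ⟨c, hc, rfl⟩ := hEcell
      have hcx : c 0 = pointCell (x 0) := cell1_eq_pointCell (hc 0) (hxE 0)
      have hcy : c 0 = pointCell (y 0) := cell1_eq_pointCell (hc 0) (hyE 0)
      have hpceq : pcV (fun _ : Fin 1 => x 0) = pcV (fun _ : Fin 1 => y 0) := by
        rw [pcV_one, pcV_one, ← hcx, ← hcy]
      -- identify the F1-cells of x and y with pcV of their heads
      obtain ⟨C₁, hC₁, hxh, hxt⟩ := hEsub hxE
      obtain ⟨C₂, hC₂, hyh, hyt⟩ := hEsub hyE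
      have e1 : C₁ = pcV (fun _ : Fin 1 => x 0) := cell_eq_pcV hC₁.1 hxh
      have e2 : C₂ = pcV (fun _ : Fin 1 => y 0) := cell_eq_pcV hC₂.1 hyh
      have e12 : C₂ = C₁ := by rw [e1, e2, hpceq]
      rw [e12] at hyt
      -- the tail cell
      set D : Set (Fin n → ℝ) := {z | ∀ i, z i ∈ c i.succ} with hDdef
      have hDcell : Cell D := ⟨fun i => c i.succ, fun i => hc i.succ, rfl⟩
      have hDsub : D ⊆ GC C₁ := by
        intro z hz
        have hw : Fin.cons (x 0) z ∈ {w : Fin (n+1) → ℝ | ∀ i, w i ∈ c i} := by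
          intro j
          refine Fin.cases ?_ (fun i => ?_) j
          · simpa using hxE 0
          · simpa using hz i
        obtain ⟨C₃, hC₃, hwh, hwt⟩ := hEsub hw
        have e3 := cell_eq_pcV hC₃.1 hwh
        have e4 : C₃ = C₁ := by rw [e3, e1]; simp [Fin.cons_zero]
        rw [e4] at hwt
        simpa [Fin.tail_cons] using hwt
      have htails : φC C₁ (Fin.tail x) = φC C₁ (Fin.tail y) := by
        refine hconst C₁ hC₁ D ⟨hDcell, hDsub⟩ _ ?_ _ ?_
        · intro i; exact hxE i.succ
        · intro i; exact hyE i.succ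
      rw [hΦdef]; simp only []
      rw [← e1, ← hpceq, ← e1]
      exact htails
    have key : {x : Fin (n + 2) → ℝ | ∃ C ∈ cellsOf F1,
        (fun _ : Fin 1 => x 0) ∈ C ∧ Fin.tail x ∈ s C}
        = {x : Fin (n + 2) → ℝ | Fin.init x ∈ G ∧ 0 < x (Fin.last (n + 1)) ∧
            x (Fin.last (n + 1)) < (Φ (Fin.init x) : ℝ)} := by
      ext x
      have hhead : (fun _ : Fin 1 => Fin.init x 0) = (fun _ : Fin 1 => x 0) := by
        funext i; rw [init_zero]
      constructor
      · rintro ⟨C, hC, hxh, hxt⟩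
        have hCeq : C = pcV (fun _ : Fin 1 => x 0) := cell_eq_pcV hC.1 hxh
        rw [hEq C hC] at hxt
        obtain ⟨ht1, ht2, ht3⟩ := hxt
        refine ⟨⟨C, hC, by rw [hhead]; exact hxh, ?_⟩, ?_, ?_⟩
        · rw [tail_init]; exact ht1
        · rw [← tail_last x]; exact ht2
        · have : Φ (Fin.init x) = φC C (Fin.init (Fin.tail x)) := by
            rw [hΦdef]; simp only []
            rw [hhead, ← hCeq, tail_init]
          rw [this, ← tail_last x]
          exact ht3
      · rintro ⟨⟨C, hC, hxh, hxt⟩, h0, hlt⟩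
        rw [hhead] at hxh
        have hCeq : C = pcV (fun _ : Fin 1 => x 0) := cell_eq_pcV hC.1 hxh
        refine ⟨C, hC, hxh, ?_⟩
        rw [hEq C hC]
        refine ⟨?_, ?_, ?_⟩
        · rw [← tail_init]; exact hxt
        · rw [tail_last]; exact h0
        · have : Φ (Fin.init x) = φC C (Fin.init (Fin.tail x)) := by
            rw [hΦdef]; simp only []
            rw [hhead, ← hCeq, tail_init]
          rw [tail_last, ← this]
          exact hlt
    rw [key]
    exact FortB.step G Φ hGB hΦ1 hΦconst
lemma slice_A (ℓ : ℕ) (hℓ : 1 ≤ ℓ) :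
    ∀ (G : Set (Fin ℓ → ℝ)) (φ : (Fin ℓ → ℝ) → ℕ),
      FortA ℓ G → (∀ x ∈ G, 1 ≤ φ x) →
      (∀ C ∈ cellsOf G, ∀ x ∈ C, ∀ y ∈ C, φ x = φ y) →
      FortA (ℓ + 1) {x : Fin (ℓ + 1) → ℝ | Fin.init x ∈ G ∧ 0 < x (Fin.last ℓ) ∧
        x (Fin.last ℓ) < (φ (Fin.init x) : ℝ)} := by
  induction ℓ, hℓ using Nat.le_induction with
  | base =>
    intro G φ hG hφ hconst
    set s : Set (Fin 1 → ℝ) → Set (Fin 1 → ℝ) :=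
      fun C => {z : Fin 1 → ℝ | z 0 ∈ Set.Ioo (0:ℝ) ((φ (ptOf C) : ℝ))} with hsdef
    have hsA : ∀ C ∈ cellsOf G, FortA 1 (s C) := by
      intro C hC
      have hpt : ptOf C ∈ C := ptOf_mem (cell_nonempty hC.1)
      exact FortA.base (φ (ptOf C)) (hφ _ (hC.2 hpt))
    have key : {x : Fin 2 → ℝ | Fin.init x ∈ G ∧ 0 < x (Fin.last 1) ∧
          x (Fin.last 1) < (φ (Fin.init x) : ℝ)}
        = {x : Fin 2 → ℝ | ∃ C ∈ cellsOf G,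
            (fun _ : Fin 1 => x 0) ∈ C ∧ Fin.tail x ∈ s C} := by
      ext x
      have hinit : Fin.init x = fun _ : Fin 1 => x 0 := init_one x
      constructor
      · rintro ⟨h1, h0, hlt⟩
        have hC : pcV (Fin.init x) ∈ cellsOf G := ⟨cell_pcV _, coverage_A hG _ h1⟩
        refine ⟨pcV (Fin.init x), hC, ?_, ?_⟩
        · rw [← hinit]; exact mem_pcV _
        · have hpt : ptOf (pcV (Fin.init x)) ∈ pcV (Fin.init x) :=
            ptOf_mem (cell_nonempty hC.1)
          have hφeq : φ (ptOf (pcV (Fin.init x))) = φ (Fin.init x) :=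
            hconst _ hC _ hpt _ (mem_pcV _)
          show Fin.tail x 0 ∈ Set.Ioo (0:ℝ) _
          rw [tail_zero_one, hφeq]
          exact ⟨h0, hlt⟩
      · rintro ⟨C, hC, hxh, hxt⟩
        have hinC : Fin.init x ∈ C := by rw [hinit]; exact hxh
        have hxt' : Fin.tail x 0 ∈ Set.Ioo (0:ℝ) ((φ (ptOf C) : ℝ)) := hxt
        rw [tail_zero_one] at hxt'
        have hpt : ptOf C ∈ C := ptOf_mem (cell_nonempty hC.1)
        have hφeq : φ (ptOf C) = φ (Fin.init x) := hconst _ hC _ hpt _ hinC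
        rw [hφeq] at hxt'
        exact ⟨hC.2 hinC, hxt'.1, hxt'.2⟩
    rw [key]
    exact FortA.step G s hG hsA
  | succ n hn ih =>
    intro G φ hG hφ hconst
    obtain ⟨F1, t, hF1, ht, hGeq⟩ := fortA_succ_inv hn hG
    set φC : Set (Fin 1 → ℝ) → (Fin n → ℝ) → ℕ :=
      fun C y => φ (Fin.cons (ptOf C 0) y) with hφCdef
    set s : Set (Fin 1 → ℝ) → Set (Fin (n + 1) → ℝ) :=
      fun C => {z : Fin (n + 1) → ℝ | Fin.init z ∈ t C ∧ 0 < z (Fin.last n) ∧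
        z (Fin.last n) < (φC C (Fin.init z) : ℝ)} with hsdef
    -- membership of cons points in G
    have hconsG : ∀ C ∈ cellsOf F1, ∀ a, (fun _ : Fin 1 => a) ∈ C → ∀ y ∈ t C,
        Fin.cons a y ∈ G := by
      intro C hC a ha y hy
      rw [hGeq]
      refine ⟨C, hC, ?_, ?_⟩
      · simpa only [Fin.cons_zero] using ha
      · simpa [Fin.tail_cons] using hy
    have hptC : ∀ C ∈ cellsOf F1, (fun _ : Fin 1 => ptOf C 0) ∈ C := by
      intro C hC
      have hpt : ptOf C ∈ C := ptOf_mem (cell_nonempty hC.1)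
      have : (fun _ : Fin 1 => ptOf C 0) = ptOf C := fin1_funext rfl
      rw [this]; exact hpt
    have hsA : ∀ C ∈ cellsOf F1, FortA (n + 1) (s C) := by
      intro C hC
      refine ih (t C) (φC C) (ht C hC) ?_ ?_
      · intro y hy
        exact hφ _ (hconsG C hC _ (hptC C hC) y hy)
      · intro D hD y hy z hz
        obtain ⟨cf, hcf, hCeq'⟩ := hC.1
        set E : Set (Fin (n + 1) → ℝ) := {w | w 0 ∈ cf 0 ∧ Fin.tail w ∈ D} with hEdef
        have hEcell : Cell E := cell_cons (hcf 0) hD.1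
        have hEsub : E ⊆ G := by
          rintro w ⟨hw0, hwt⟩
          rw [hGeq]
          refine ⟨C, hC, ?_, hD.2 hwt⟩
          rw [hCeq']
          intro i
          rw [Subsingleton.elim i 0]
          exact hw0
        have hmem : ∀ u ∈ D, Fin.cons (ptOf C 0) u ∈ E := by
          intro u hu
          constructor
          · have hthis : ptOf C ∈ C := ptOf_mem (cell_nonempty hC.1)
            have h2 : ptOf C ∈ {x : Fin 1 → ℝ | ∀ i, x i ∈ cf i} := by
              rw [← hCeq']; exact hthis
            simpa using h2 0
          · simpa [Fin.tail_cons] using hu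
        exact hconst E ⟨hEcell, hEsub⟩ _ (hmem y hy) _ (hmem z hz)
    -- the shared cell argument
    have hshared : ∀ (x : Fin (n + 2) → ℝ) (C : Set (Fin 1 → ℝ)), C ∈ cellsOf F1 →
        (fun _ : Fin 1 => x 0) ∈ C → Fin.tail (Fin.init x) ∈ t C →
        φ (Fin.init x) = φC C (Fin.init (Fin.tail x)) := by
      intro x C hC hxh htc
      have hCeq : C = pcV (fun _ : Fin 1 => x 0) := cell_eq_pcV hC.1 hxh
      set E : Set (Fin (n + 1) → ℝ) :=
        {w | w 0 ∈ pointCell (x 0) ∧ Fin.tail w ∈ pcV (Fin.tail (Fin.init x))} with hEdef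
      have hEcell : Cell E := cell_cons (cell1_pointCell _) (cell_pcV _)
      have hEsub : E ⊆ G := by
        rintro w ⟨hw0, hwt⟩
        rw [hGeq]
        refine ⟨C, hC, ?_, ?_⟩
        · rw [hCeq, pcV_one]
          exact hw0
        · exact coverage_A (ht C hC) _ htc hwt
      have hx_mem : Fin.init x ∈ E := by
        constructor
        · rw [init_zero]; exact mem_pointCell _
        · exact mem_pcV _
      have hcons_mem : Fin.cons (ptOf C 0) (Fin.init (Fin.tail x)) ∈ E := by
        constructor
        · have hthis : ptOf C ∈ C := ptOf_mem (cell_nonempty hC.1)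
          have h2 : ptOf C ∈ {z : Fin 1 → ℝ | z 0 ∈ pointCell (x 0)} := by
            rw [← pcV_one, ← hCeq]; exact hthis
          simpa using h2
        · rw [Fin.tail_cons, ← tail_init]
          exact mem_pcV _
      exact hconst E ⟨hEcell, hEsub⟩ _ hx_mem _ hcons_mem
    have key : {x : Fin (n + 2) → ℝ | Fin.init x ∈ G ∧ 0 < x (Fin.last (n + 1)) ∧
          x (Fin.last (n + 1)) < (φ (Fin.init x) : ℝ)}
        = {x : Fin (n + 2) → ℝ | ∃ C ∈ cellsOf F1,
            (fun _ : Fin 1 => x 0) ∈ C ∧ Fin.tail x ∈ s C} := by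
      ext x
      have hhead : (fun _ : Fin 1 => Fin.init x 0) = (fun _ : Fin 1 => x 0) := by
        funext i; rw [init_zero]
      constructor
      · rintro ⟨h1, h0, hlt⟩
        rw [hGeq] at h1
        obtain ⟨C, hC, hxh, hxt⟩ := h1
        rw [hhead] at hxh
        refine ⟨C, hC, hxh, ?_, ?_, ?_⟩
        · rw [← tail_init]; exact hxt
        · rw [tail_last]; exact h0
        · rw [tail_last, ← hshared x C hC hxh hxt]
          exact hlt
      · rintro ⟨C, hC, hxh, hxt⟩
        obtain ⟨ht1, ht2, ht3⟩ := hxt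
        have htc : Fin.tail (Fin.init x) ∈ t C := by rw [tail_init]; exact ht1
        refine ⟨?_, ?_, ?_⟩
        · rw [hGeq]
          exact ⟨C, hC, by rw [hhead]; exact hxh, htc⟩
        · rw [← tail_last x]; exact ht2
        · rw [← tail_last x, hshared x C hC hxh htc]
          exact ht3
    rw [key]
    exact FortA.step F1 s hF1 hsA
/-- The two inductive definitions of forts coincide: `A(ℓ) = B(ℓ)` for every `ℓ ≥ 1`. -/
theorem fortA_eq_fortB :
    ∀ ℓ : ℕ, 1 ≤ ℓ → ∀ S : Set (Fin ℓ → ℝ), FortA ℓ S ↔ FortB ℓ S := by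
  intro ℓ hℓ
  induction ℓ, hℓ using Nat.le_induction with
  | base => exact fun S => fortA1_iff_fortB1
  | succ n hn ih =>
    intro S
    constructor
    · intro h
      cases h with
      | base m hm => omega
      | step F1 s hF1 hs =>
        exact join_B n hn F1 s (fortA1_iff_fortB1.mp hF1)
          (fun C hC => (ih (s C)).mp (hs C hC))
    · intro h
      cases h with
      | base m hm => omega
      | step G φ hG hφ hconst =>
        exact slice_A n hn G φ ((ih G).mpr hG) hφ hconst

end Forts
end

section
/- Every morphism of forts φ: ℱ→𝒢 (forts of length ℓ) is injective. Moreover, for every 1≤i≤ℓ and every fixed (x_1,…,x_{i−1})∈π_{i−1}(ℱ), the function t↦φ_i(x_1,…,x_{i−1},t) is continuous on its domain {t∈ℝ : (x_1,…,x_{i−1},t)∈π_i(ℱ)}. -/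
open Set

namespace Forts


lemma cell1_nonempty_s3 {c : Set ℝ} (hc : Cell1 c) : c.Nonempty := by
  obtain ⟨k, hk | hk⟩ := hc
  · exact hk ▸ ⟨k, rfl⟩
  · exact hk ▸ ⟨k + 1/2, by constructor <;> norm_num⟩

lemma cell1_unique {c c' : Set ℝ} (hc : Cell1 c) (hc' : Cell1 c') {t : ℝ}
    (ht : t ∈ c) (ht' : t ∈ c') : c = c' := by
  obtain ⟨k, hk | hk⟩ := hc <;> obtain ⟨k', hk' | hk'⟩ := hc' <;> subst hk hk'
  · simp only [mem_singleton_iff] at ht ht'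
    rw [ht] at ht'; exact_mod_cast congrArg singleton ht'
  · exfalso
    simp only [mem_singleton_iff] at ht; subst ht
    obtain ⟨h1, h2⟩ := ht'
    rw [Int.cast_lt] at h1
    have : (k : ℝ) < (k' : ℝ) + 1 := h2
    rw [show ((k':ℝ) + 1) = ((k' + 1 : ℤ) : ℝ) by push_cast; ring, Int.cast_lt] at this
    omega
  · exfalso
    simp only [mem_singleton_iff] at ht'; subst ht'
    obtain ⟨h1, h2⟩ := ht
    rw [Int.cast_lt] at h1
    have : (k' : ℝ) < (k : ℝ) + 1 := h2
    rw [show ((k:ℝ) + 1) = ((k + 1 : ℤ) : ℝ) by push_cast; ring, Int.cast_lt] at this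
    omega
  · obtain ⟨h1, h2⟩ := ht
    obtain ⟨h1', h2'⟩ := ht'
    have a1 : (k : ℝ) < (k' : ℝ) + 1 := h1.trans h2'
    have a2 : (k' : ℝ) < (k : ℝ) + 1 := h1'.trans h2
    rw [show ((k':ℝ) + 1) = ((k' + 1 : ℤ) : ℝ) by push_cast; ring, Int.cast_lt] at a1
    rw [show ((k:ℝ) + 1) = ((k + 1 : ℤ) : ℝ) by push_cast; ring, Int.cast_lt] at a2
    have : k = k' := by omega
    rw [this]

lemma cell1_exists_subset {t : ℝ} {n : ℕ} (ht : t ∈ Ioo (0:ℝ) n) :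
    ∃ c, Cell1 c ∧ t ∈ c ∧ c ⊆ Ioo (0:ℝ) n := by
  by_cases hint : ∃ k : ℤ, (k : ℝ) = t
  · obtain ⟨k, rfl⟩ := hint
    refine ⟨{(k:ℝ)}, ⟨k, Or.inl rfl⟩, rfl, ?_⟩
    intro y hy; rw [mem_singleton_iff] at hy; exact hy ▸ ht
  · refine ⟨Ioo (⌊t⌋ : ℝ) ((⌊t⌋ : ℝ) + 1), ⟨⌊t⌋, Or.inr rfl⟩, ⟨?_, Int.lt_floor_add_one t⟩, ?_⟩
    · exact lt_of_le_of_ne (Int.floor_le t) (fun h => hint ⟨⌊t⌋, h⟩)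
    · intro y hy
      have h0 : (0:ℤ) ≤ ⌊t⌋ := Int.floor_nonneg.2 ht.1.le
      have h1 : ⌊t⌋ < (n:ℤ) := by
        rw [Int.floor_lt]; exact_mod_cast ht.2
      refine ⟨lt_of_le_of_lt (by exact_mod_cast h0) hy.1, lt_of_lt_of_le hy.2 ?_⟩
      have : ⌊t⌋ + 1 ≤ (n:ℤ) := h1
      exact_mod_cast this

lemma cell_nonempty_s3 {ℓ : ℕ} {C : Set (Fin ℓ → ℝ)} (hC : Cell C) : C.Nonempty := by
  obtain ⟨c, hc, rfl⟩ := hC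
  have h : ∀ i, ∃ t, t ∈ c i := fun i => cell1_nonempty_s3 (hc i)
  exact ⟨fun i => (h i).choose, fun i => (h i).choose_spec⟩

lemma not_fort_zero {S : Set (Fin 0 → ℝ)} : ¬ Fort 0 S := fun h => by cases h

lemma fort_has_cell {ℓ : ℕ} {F : Set (Fin ℓ → ℝ)} (h : Fort ℓ F) : ∃ C, C ∈ cellsOf F := by
  induction h with
  | base n hn =>
    refine ⟨{x | ∀ i, x i ∈ (fun _ : Fin 1 => Ioo (0:ℝ) 1) i},
      ⟨⟨fun _ => Ioo (0:ℝ) 1, fun _ => ⟨0, Or.inr (by norm_num)⟩, rfl⟩, ?_⟩⟩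
    intro y hy
    exact ⟨(hy 0).1, lt_of_lt_of_le (hy 0).2 (by exact_mod_cast hn)⟩
  | step F1 s hF1 hs ih1 ihs =>
    obtain ⟨C, hC⟩ := ih1
    obtain ⟨C', hC'⟩ := ihs C hC
    obtain ⟨c1, hc1, hC1eq⟩ := hC.1
    obtain ⟨c', hc', hC'eq⟩ := hC'.1
    have hcc : ∀ i, Cell1 ((Fin.cons (c1 0) c' : _ → Set ℝ) i) := by
      intro i
      refine Fin.cases ?_ ?_ i
      · simpa using hc1 0
      · intro j; simpa using hc' j
    refine ⟨{x | ∀ i, x i ∈ (Fin.cons (c1 0) c' : _ → Set ℝ) i}, ⟨⟨(Fin.cons (c1 0) c' : _ → Set ℝ), hcc, rfl⟩, ?_⟩⟩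
    intro y hy
    refine ⟨C, hC, ?_, ?_⟩
    · rw [hC1eq]
      intro j
      have := hy 0
      simp only [Fin.cons_zero] at this
      rwa [Fin.fin_one_eq_zero j]
    · apply hC'.2
      rw [hC'eq]
      intro j
      have := hy j.succ
      simpa [Fin.tail] using this

lemma fort_nonempty {ℓ : ℕ} {F : Set (Fin ℓ → ℝ)} (h : Fort ℓ F) : F.Nonempty := by
  obtain ⟨C, hC⟩ := fort_has_cell h
  obtain ⟨x, hx⟩ := cell_nonempty_s3 hC.1
  exact ⟨x, hC.2 hx⟩

lemma fort_one {F : Set (Fin 1 → ℝ)} (h : Fort 1 F) :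
    ∃ n : ℕ, 0 < n ∧ F = {x : Fin 1 → ℝ | x 0 ∈ Ioo (0:ℝ) (n:ℝ)} := by
  cases h with
  | base n hn => exact ⟨n, hn, rfl⟩
  | step F1 s hF1 hs =>
    obtain ⟨C, hC⟩ := fort_has_cell hF1
    exact absurd (hs C hC) not_fort_zero

lemma cell_one_unique {C C' : Set (Fin 1 → ℝ)} (hC : Cell C) (hC' : Cell C')
    {y : Fin 1 → ℝ} (hy : y ∈ C) (hy' : y ∈ C') : C = C' := by
  obtain ⟨c, hc, rfl⟩ := hC
  obtain ⟨c', hc', rfl⟩ := hC'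
  have : c 0 = c' 0 := cell1_unique (hc 0) (hc' 0) (hy 0) (hy' 0)
  ext z
  constructor <;> intro hz <;> intro j <;> rw [Fin.fin_one_eq_zero j]
  · rw [← this]; exact hz 0
  · rw [this]; exact hz 0

lemma fort_fiber {ℓ : ℕ} {G : Set (Fin ℓ → ℝ)} (hG : Fort ℓ G) :
    ∀ (i : Fin ℓ) (p : Fin ℓ → ℝ),
      {t : ℝ | ∃ w ∈ G, (∀ j, j < i → w j = p j) ∧ w i = t} = (∅ : Set ℝ) ∨
      ∃ n : ℕ, 0 < n ∧
        {t : ℝ | ∃ w ∈ G, (∀ j, j < i → w j = p j) ∧ w i = t} = Ioo (0:ℝ) (n:ℝ) := by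
  induction hG with
  | base n hn =>
    intro i p
    right
    refine ⟨n, hn, ?_⟩
    ext t
    simp only [mem_setOf_eq, mem_Ioo]
    constructor
    · rintro ⟨w, hw, _, rfl⟩
      rw [Fin.fin_one_eq_zero i]
      exact hw
    · intro ht
      refine ⟨fun _ => t, ht, ?_, rfl⟩
      intro j hj
      exact absurd (Fin.fin_one_eq_zero j ▸ Fin.fin_one_eq_zero i ▸ hj) (lt_irrefl _)
  | @step m F1 s hF1 hs ih1 ihs =>
    intro i p
    obtain ⟨n1, hn1, hF1eq⟩ := fort_one hF1
    by_cases h0 : (i : ℕ) = 0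
    · have hi0 : i = 0 := Fin.ext h0
      right
      refine ⟨n1, hn1, ?_⟩
      ext t
      simp only [mem_setOf_eq]
      constructor
      · rintro ⟨w, ⟨C, hC, hw0, _⟩, _, rfl⟩
        have hmem := hC.2 hw0
        rw [hF1eq] at hmem
        rw [hi0]
        exact hmem
      · intro ht
        obtain ⟨c, hc, htc, hsub⟩ := cell1_exists_subset ht
        have hCcell : Cell {y : Fin 1 → ℝ | ∀ j, y j ∈ (fun _ : Fin 1 => c) j} :=
          ⟨fun _ => c, fun _ => hc, rfl⟩
        have hCF1 : {y : Fin 1 → ℝ | ∀ j, y j ∈ (fun _ : Fin 1 => c) j} ⊆ F1 := by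
          intro y hy; rw [hF1eq]; exact hsub (hy 0)
        obtain ⟨y0, hy0⟩ := fort_nonempty (hs _ ⟨hCcell, hCF1⟩)
        refine ⟨Fin.cons t y0, ⟨_, ⟨hCcell, hCF1⟩, ?_, ?_⟩, ?_, ?_⟩
        · intro j; simp [Fin.cons_zero]; exact htc
        · rwa [Fin.tail_cons]
        · intro j hj
          rw [hi0] at hj
          exact absurd hj (Fin.not_lt_zero j)
        · rw [hi0]; simp [Fin.cons_zero]
    · have him : (i : ℕ) - 1 < m := by have := i.isLt; omega
      set i' : Fin m := ⟨(i : ℕ) - 1, him⟩ with hi'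
      have hisucc : i = Fin.succ i' := by
        apply Fin.ext
        simp [Fin.val_succ, hi']
        omega
      have h0i : (0 : Fin (m + 1)) < i := by
        rw [Fin.lt_def]
        simp
        have h00 : ((0 : Fin (m + 1)) : ℕ) = 0 := rfl
        omega
      by_cases hex : ∃ C ∈ cellsOf F1, (fun _ : Fin 1 => p 0) ∈ C
      · obtain ⟨C, hC, hpC⟩ := hex
        have key : {t : ℝ | ∃ w ∈ {x : Fin (m+1) → ℝ | ∃ C ∈ cellsOf F1,
              (fun _ : Fin 1 => x 0) ∈ C ∧ Fin.tail x ∈ s C},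
              (∀ j, j < i → w j = p j) ∧ w i = t}
            = {t : ℝ | ∃ y ∈ s C, (∀ j', j' < i' → y j' = Fin.tail p j') ∧ y i' = t} := by
          ext t
          simp only [mem_setOf_eq]
          constructor
          · rintro ⟨w, ⟨C'', hC'', hw0, hwtail⟩, hpre, rfl⟩
            have hw0p : w 0 = p 0 := hpre 0 h0i
            have : C'' = C := by
              apply cell_one_unique hC''.1 hC.1 hw0
              rw [hw0p] at hw0 ⊢
              exact hpC
            subst this
            refine ⟨Fin.tail w, hwtail, ?_, ?_⟩
            · intro j' hj'
              have : j'.succ < i := by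
                rw [hisucc, Fin.succ_lt_succ_iff]
                exact hj'
              exact hpre j'.succ this
            · rw [hisucc]; rfl
          · rintro ⟨y, hy, hpre, rfl⟩
            refine ⟨Fin.cons (p 0) y, ⟨C, hC, ?_, ?_⟩, ?_, ?_⟩
            · simpa only [Fin.cons_zero] using hpC
            · rwa [Fin.tail_cons]
            · intro j
              refine Fin.cases ?_ ?_ j
              · intro _; simp [Fin.cons_zero]
              · intro j'' hj''
                rw [Fin.cons_succ]
                have hlt : j'' < i' := by
                  rw [hisucc, Fin.succ_lt_succ_iff] at hj''
                  exact hj''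
                exact hpre j'' hlt
            · rw [hisucc, Fin.cons_succ]
        rw [key]
        exact ihs C hC i' (Fin.tail p)
      · left
        rw [eq_empty_iff_forall_notMem]
        rintro t ⟨w, ⟨C, hC, hw0, _⟩, hpre, rfl⟩
        have hw0p : w 0 = p 0 := hpre 0 h0i
        rw [hw0p] at hw0
        exact hex ⟨C, hC, hw0⟩

lemma precell_coord {ℓ : ℕ} {X : Set (Fin ℓ → ℝ)} {f : (Fin ℓ → ℝ) → (Fin ℓ → ℝ)}
    (h : Precellular X f) {x y : Fin ℓ → ℝ} (hx : x ∈ X) (hy : y ∈ X) :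
    ∀ j : Fin ℓ, (∀ j', j' ≤ j → f x j' = f y j') → x j = y j := by
  suffices H : ∀ n : ℕ, ∀ j : Fin ℓ, (j : ℕ) ≤ n →
      (∀ j', j' ≤ j → f x j' = f y j') → x j = y j by
    intro j
    exact H j j le_rfl
  intro n
  induction n with
  | zero =>
    intro j hj hf
    have hpref : ∀ j', j' < j → x j' = y j' := by
      intro j' hj'
      exact absurd (Fin.lt_def.mp hj') (by omega)
    by_contra hne
    rcases lt_or_gt_of_ne hne with hlt | hgt
    · exact (ne_of_lt (h.2 j x hx y hy hpref hlt)) (hf j le_rfl)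
    · exact (ne_of_lt (h.2 j y hy x hx (fun j' hj' => (hpref j' hj').symm) hgt))
        (hf j le_rfl).symm
  | succ n ih =>
    intro j hj hf
    have hpref : ∀ j', j' < j → x j' = y j' := by
      intro j' hj'
      exact ih j' (by have := Fin.lt_def.mp hj'; omega)
        (fun j'' hj'' => hf j'' (le_trans hj'' (le_of_lt hj')))
    by_contra hne
    rcases lt_or_gt_of_ne hne with hlt | hgt
    · exact (ne_of_lt (h.2 j x hx y hy hpref hlt)) (hf j le_rfl)
    · exact (ne_of_lt (h.2 j y hy x hx (fun j' hj' => (hpref j' hj').symm) hgt))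
        (hf j le_rfl).symm


/-- Every morphism of forts is injective; moreover each coordinate function, with the
first `i - 1` coordinates fixed, is continuous on its domain
`{t : (x_1, …, x_{i-1}, t) ∈ π_i(ℱ)}`. -/
theorem morphism_injOn_and_fiberwise_continuous {ℓ : ℕ} (F G : Set (Fin ℓ → ℝ))
    (hF : Fort ℓ F) (hG : Fort ℓ G)
    (φ : (Fin ℓ → ℝ) → (Fin ℓ → ℝ)) (hφ : Morphism F G φ) :
    Set.InjOn φ F ∧
      ∀ i : Fin ℓ, ∀ x ∈ F, ∃ g : ℝ → ℝ,
        ContinuousOn g {t : ℝ | ∃ z ∈ F, (∀ j : Fin ℓ, j < i → z j = x j) ∧ z i = t} ∧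
        ∀ z ∈ F, (∀ j : Fin ℓ, j < i → z j = x j) → g (z i) = φ z i := by
  obtain ⟨hsurj, hpre, hcells⟩ := hφ
  constructor
  · intro a ha b hb hab
    funext j
    exact precell_coord hpre ha hb j (fun j' _ => by rw [hab])
  · intro i x hx
    classical
    set D := {t : ℝ | ∃ z ∈ F, (∀ j : Fin ℓ, j < i → z j = x j) ∧ z i = t} with hD
    set g : ℝ → ℝ := fun t =>
      if h : ∃ z, z ∈ F ∧ (∀ j, j < i → z j = x j) ∧ z i = t then φ h.choose i else 0 with hg
    have hgspec : ∀ z ∈ F, (∀ j, j < i → z j = x j) → g (z i) = φ z i := by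
      intro z hz hzp
      have hex : ∃ z', z' ∈ F ∧ (∀ j, j < i → z' j = x j) ∧ z' i = z i := ⟨z, hz, hzp, rfl⟩
      simp only [hg]
      rw [dif_pos hex]
      obtain ⟨hw1, hw2, hw3⟩ := hex.choose_spec
      apply hpre.1 i _ hw1 z hz
      intro j hj
      rcases lt_or_eq_of_le hj with h' | h'
      · rw [hw2 j h', hzp j h']
      · rw [h']
        exact hw3
    have hmono : StrictMonoOn g D := by
      intro t1 h1 t2 h2 h12
      obtain ⟨z1, hz1, hp1, he1⟩ := h1
      obtain ⟨z2, hz2, hp2, he2⟩ := h2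
      rw [← he1, ← he2, hgspec z1 hz1 hp1, hgspec z2 hz2 hp2]
      apply hpre.2 i z1 hz1 z2 hz2
      · intro j hj; rw [hp1 j hj, hp2 j hj]
      · rw [he1, he2]; exact h12
    have hxD : x i ∈ D := ⟨x, hx, fun j _ => rfl, rfl⟩
    have hfib := fort_fiber hF i x
    rw [← hD] at hfib
    obtain hDe | ⟨n, hn, hDeq⟩ := hfib
    · rw [hDe] at hxD
      exact absurd hxD (notMem_empty _)
    have hbetween : ∀ c t1 t2, t1 ∈ D → t2 ∈ D → g t1 < c → c < g t2 → ∃ t ∈ D, g t = c := by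
      intro c t1 t2 h1 h2 hc1 hc2
      obtain ⟨z1, hz1, hp1, he1⟩ := h1
      obtain ⟨z2, hz2, hp2, he2⟩ := h2
      have hprefix : ∀ z, z ∈ F → (∀ j, j < i → z j = x j) → ∀ j, j < i → φ z j = φ x j := by
        intro z hz hzp j hj
        apply hpre.1 j z hz x hx
        intro j' hj'
        exact hzp j' (lt_of_le_of_lt hj' hj)
      have hφz1 : φ z1 ∈ G := hsurj ▸ mem_image_of_mem φ hz1
      have hφz2 : φ z2 ∈ G := hsurj ▸ mem_image_of_mem φ hz2
      have hm1 : φ z1 i ∈ {t : ℝ | ∃ w ∈ G, (∀ j, j < i → w j = φ x j) ∧ w i = t} :=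
        ⟨φ z1, hφz1, hprefix z1 hz1 hp1, rfl⟩
      have hm2 : φ z2 i ∈ {t : ℝ | ∃ w ∈ G, (∀ j, j < i → w j = φ x j) ∧ w i = t} :=
        ⟨φ z2, hφz2, hprefix z2 hz2 hp2, rfl⟩
      have a1 : g t1 = φ z1 i := by rw [← he1]; exact hgspec z1 hz1 hp1
      have a2 : g t2 = φ z2 i := by rw [← he2]; exact hgspec z2 hz2 hp2
      obtain hEe | ⟨mE, hmE, hEeq⟩ := fort_fiber hG i (φ x)
      · rw [hEe] at hm1
        exact absurd hm1 (notMem_empty _)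
      have hc : c ∈ {t : ℝ | ∃ w ∈ G, (∀ j, j < i → w j = φ x j) ∧ w i = t} := by
        rw [hEeq] at hm1 hm2 ⊢
        constructor
        · calc (0:ℝ) < φ z1 i := hm1.1
            _ = g t1 := a1.symm
            _ < c := hc1
        · calc c < g t2 := hc2
            _ = φ z2 i := a2
            _ < mE := hm2.2
      obtain ⟨w, hw, hwp, hwc⟩ := hc
      rw [← hsurj] at hw
      obtain ⟨u, hu, hφu⟩ := hw
      have hup : ∀ j, j < i → u j = x j := by
        intro j hj
        apply precell_coord hpre hu hx j
        intro j' hj'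
        rw [hφu]
        exact hwp j' (lt_of_le_of_lt hj' hj)
      refine ⟨u i, ⟨u, hu, hup, rfl⟩, ?_⟩
      rw [hgspec u hu hup, hφu]
      exact hwc
    refine ⟨g, ?_, hgspec⟩
    intro a ha
    have haI : a ∈ Ioo (0:ℝ) n := hDeq ▸ ha
    have hnhds : D ∈ nhds a := by
      rw [hDeq]
      exact isOpen_Ioo.mem_nhds haI
    apply ContinuousAt.continuousWithinAt
    apply hmono.continuousAt_of_exists_between hnhds
    · intro b hb
      have ha2 : a/2 ∈ D := by
        rw [hDeq]
        exact ⟨half_pos haI.1, lt_trans (half_lt_self haI.1) haI.2⟩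
      have hlt : g (a/2) < g a := hmono ha2 ha (half_lt_self haI.1)
      rcases le_or_gt b (g (a/2)) with h' | h'
      · exact ⟨a/2, ha2, h', hlt⟩
      · obtain ⟨t, ht, hgt⟩ := hbetween b (a/2) a ha2 ha h' hb
        exact ⟨t, ht, hgt.symm.le, hgt ▸ hb⟩
    · intro b hb
      have ha2 : (a + n)/2 ∈ D := by
        rw [hDeq]
        have hn' : (0:ℝ) < n := by exact_mod_cast hn
        constructor
        · have := haI.1; linarith
        · have := haI.2; linarith
      have hlt : g a < g ((a + n)/2) := by
        apply hmono ha ha2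
        have := haI.2; linarith
      rcases le_or_gt (g ((a + n)/2)) b with h' | h'
      · exact ⟨(a + n)/2, ha2, hlt, h'⟩
      · obtain ⟨t, ht, hgt⟩ := hbetween b a ((a + n)/2) ha ha2 hb h'
        exact ⟨t, ht, hgt ▸ hb, hgt.le⟩

end Forts
end
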